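/- (Lindström; Gessel–Viennot) Let R be a commutative ring, let V be a finite set of vertices, and let w : V × V → R be a weight function (w(u,v) is interpreted as the total weight of edges from u to v) such that the relation u → v defined by w(u,v) ≠ 0 is acyclic (its transitive closure is irreflexive). A path from u to v is a finite sequence u = v_0 → v_1 → ⋯ → v_m = v with w(v_{j}, v_{j+1}) ≠ 0 for each j, and its weight is the product ∏_j w(v_j, v_{j+1}). Fix distinct left endpoints a_1, …, a_n ∈ V and distinct right endpoints b_1, …, b_n ∈ V, and define the n × n matrix V over R by V_{i,j} = sum of the weights of all paths from a_i to b_j (a finite sum, by acyclicity). Then det V = Σ_{(σ, ℓ)} sign(σ) · w(ℓ), where the sum ranges over all pairs of a permutation σ of {1,…,n} and an n-tuple ℓ = (ℓ_1, …, ℓ_n) of pairwise vertex-disjoint paths with ℓ_i a path from a_i to b_{σ(i)}, and w(ℓ) is the product of the weights of the paths ℓ_i. -/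

import Mathlib

open Matrix

/-- `p` is a path from `u` to `v` in the directed graph on `V` whose edge weights are
given by `w` (an edge `x → y` is present iff `w x y ≠ 0`). -/
def IsGVPath {V : Type*} {R : Type*} [CommRing R] (w : V → V → R) (u v : V)
    (p : List V) : Prop :=
  p.head? = some u ∧ p.getLast? = some v ∧ p.Chain' (fun x y => w x y ≠ 0)

/-- The weight of a path: the product of the weights of its edges. -/
def gvWeight {V : Type*} {R : Type*} [CommRing R] (w : V → V → R) (p : List V) : R :=
  ((p.zip p.tail).map fun q => w q.1 q.2).prod

namespace LGV

variable {V : Type*} {R : Type*} [CommRing R]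

lemma gvWeight_nil (w : V → V → R) : gvWeight w [] = 1 := by simp [gvWeight]

lemma gvWeight_singleton (w : V → V → R) (x : V) : gvWeight w [x] = 1 := by simp [gvWeight]

lemma gvWeight_cons_cons (w : V → V → R) (x y : V) (t : List V) :
    gvWeight w (x :: y :: t) = w x y * gvWeight w (y :: t) := by
  simp [gvWeight]

lemma gvWeight_append (w : V → V → R) (p : List V) (x : V) (q : List V) :
    gvWeight w (p ++ x :: q) = gvWeight w (p ++ [x]) * gvWeight w (x :: q) := by
  induction p with
  | nil => simp [gvWeight_singleton]
  | cons a p ih =>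
    cases p with
    | nil => simp [gvWeight_cons_cons, gvWeight_singleton]
    | cons b p' =>
      have h1 : (a :: b :: p') ++ x :: q = a :: b :: (p' ++ x :: q) := rfl
      have h2 : (a :: b :: p') ++ [x] = a :: b :: (p' ++ [x]) := rfl
      have h3 : (b :: p') ++ x :: q = b :: (p' ++ x :: q) := rfl
      have h4 : (b :: p') ++ [x] = b :: (p' ++ [x]) := rfl
      rw [h1, h2, gvWeight_cons_cons, gvWeight_cons_cons]
      rw [h3, h4] at ih
      rw [ih, mul_assoc]

lemma chain'_nodup {r : V → V → Prop} (hacyc : Irreflexive (Relation.TransGen r))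
    {p : List V} (h : List.Chain' r p) : p.Nodup := by
  haveI : IsTrans V (Relation.TransGen r) := ⟨fun _ _ _ => Relation.TransGen.trans⟩
  have h2 : List.Chain' (Relation.TransGen r) p :=
    h.imp fun _ _ hab => Relation.TransGen.single hab
  have h3 := List.isChain_iff_pairwise.mp h2
  exact h3.imp (by rintro a b hab rfl; exact hacyc _ hab)

/-- First-splitting of a list at a predicate is unique. -/
lemma first_split_unique {Q : V → Prop} : ∀ {p₁ p₂ : List V} {x₁ x₂ : V} {s₁ s₂ : List V},
    p₁ ++ x₁ :: s₁ = p₂ ++ x₂ :: s₂ → (∀ v ∈ p₁, ¬ Q v) → Q x₁ → (∀ v ∈ p₂, ¬ Q v) → Q x₂ →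
    p₁ = p₂ ∧ x₁ = x₂ ∧ s₁ = s₂ := by
  intro p₁
  induction p₁ with
  | nil =>
    intro p₂ x₁ x₂ s₁ s₂ he h₁ hx₁ h₂ hx₂
    cases p₂ with
    | nil => simpa using he
    | cons c t =>
      simp only [List.nil_append, List.cons_append, List.cons.injEq] at he
      exact absurd (he.1 ▸ hx₁) (h₂ c (by simp))
  | cons a p ih =>
    intro p₂ x₁ x₂ s₁ s₂ he h₁ hx₁ h₂ hx₂
    cases p₂ with
    | nil =>
      simp only [List.cons_append, List.nil_append, List.cons.injEq] at he
      exact absurd (he.1 ▸ hx₂) (h₁ a (by simp))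
    | cons c t =>
      simp only [List.cons_append, List.cons.injEq] at he
      obtain ⟨rfl, he⟩ := he
      obtain ⟨h1, h2, h3⟩ := ih he (fun v hv => h₁ v (by simp [hv])) hx₁
        (fun v hv => h₂ v (by simp [hv])) hx₂
      exact ⟨by rw [h1], h2, h3⟩

lemma dropWhile_cons_prop {p : V → Bool} : ∀ {l : List V} {x : V} {s : List V},
    List.dropWhile p l = x :: s → p x = false := by
  intro l
  induction l with
  | nil => intro x s h; simp at h
  | cons a t ih =>
    intro x s h
    rw [List.dropWhile_cons] at h
    split at h
    · exact ih h
    · cases h; simpa using ‹¬ p a = true›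

lemma getLast?_append_cons (l : List V) (x : V) (t : List V) :
    (l ++ x :: t).getLast? = (x :: t).getLast? := by
  cases h : (x :: t).getLast? with
  | none => exact absurd (List.getLast?_eq_none_iff.mp h) (by simp)
  | some y => simp [List.getLast?_append, h]

lemma head?_append_cons (l : List V) (x : V) (t : List V) :
    (l ++ x :: t).head? = l.head?.or (some x) := by
  simp [List.head?_append]

section Swap

variable {n : ℕ}

/-- `ℓ i` shares a vertex with some other path of the tuple. -/
def Meets (ℓ : Fin n → List V) (i : Fin n) : Prop :=
  ∃ j, j ≠ i ∧ ∃ v, v ∈ ℓ i ∧ v ∈ ℓ j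

/-- The data describing the canonical crossing of a non-vertex-disjoint path system. -/
structure GVData (n : ℕ) (V : Type*) where
  i0 : Fin n
  j0 : Fin n
  x0 : V
  pre : List V
  sufi : List V
  prej : List V
  sufj : List V

/-- `d` is the canonical crossing data for the path tuple `ℓ`. -/
structure IsSwapData (ℓ : Fin n → List V) (d : GVData n V) : Prop where
  meets : Meets ℓ d.i0
  imin : ∀ k, Meets ℓ k → d.i0 ≤ k
  eqi : ℓ d.i0 = d.pre ++ d.x0 :: d.sufi
  preQ : ∀ v ∈ d.pre, ¬ ∃ j, j ≠ d.i0 ∧ v ∈ ℓ j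
  Qx : ∃ j, j ≠ d.i0 ∧ d.x0 ∈ ℓ j
  jne : d.j0 ≠ d.i0
  xj : d.x0 ∈ ℓ d.j0
  jmin : ∀ k, k ≠ d.i0 → d.x0 ∈ ℓ k → d.j0 ≤ k
  eqj : ℓ d.j0 = d.prej ++ d.x0 :: d.sufj
  xprej : d.x0 ∉ d.prej

lemma exists_swapData {ℓ : Fin n → List V} (h : ∃ i, Meets ℓ i) :
    ∃ d : GVData n V, IsSwapData ℓ d := by
  classical
  obtain ⟨i, hi⟩ := h
  set I : Finset (Fin n) := Finset.univ.filter (fun k => Meets ℓ k) with hI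
  have hIne : I.Nonempty := ⟨i, by simp [hI, hi]⟩
  set i0 := I.min' hIne with hi0def
  have hi0 : Meets ℓ i0 := by have := I.min'_mem hIne; simpa [hI] using this
  have himin : ∀ k, Meets ℓ k → i0 ≤ k := fun k hk => I.min'_le k (by simp [hI, hk])
  set Qp : V → Prop := fun v => ∃ j, j ≠ i0 ∧ v ∈ ℓ j with hQp
  obtain ⟨j, hjne, v, hvi, hvj⟩ := id hi0
  have hvQ : Qp v := ⟨j, hjne, hvj⟩
  set p : V → Bool := fun v => !decide (Qp v) with hp
  have hdw : (ℓ i0).dropWhile p ≠ [] := by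
    rw [Ne, List.dropWhile_eq_nil_iff]
    push_neg
    exact ⟨v, hvi, by simp [hp, hvQ]⟩
  obtain ⟨x0, sufi, hrest⟩ : ∃ x0 sufi, (ℓ i0).dropWhile p = x0 :: sufi := by
    cases h' : (ℓ i0).dropWhile p with
    | nil => exact absurd h' hdw
    | cons y t => exact ⟨y, t, rfl⟩
  have heqi : ℓ i0 = (ℓ i0).takeWhile p ++ x0 :: sufi := by
    rw [← hrest, List.takeWhile_append_dropWhile]
  have hpre : ∀ u ∈ (ℓ i0).takeWhile p, ¬ Qp u := fun u hu => by
    have := List.mem_takeWhile_imp hu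
    simpa [hp] using this
  have hQx0 : Qp x0 := by
    have := dropWhile_cons_prop hrest
    simpa [hp] using this
  obtain ⟨j', hj'ne, hj'x⟩ := id hQx0
  set J : Finset (Fin n) := Finset.univ.filter (fun k => k ≠ i0 ∧ x0 ∈ ℓ k) with hJ
  have hJne : J.Nonempty := ⟨j', by simp [hJ, hj'ne, hj'x]⟩
  set j0 := J.min' hJne with hj0def
  have hj0 : j0 ≠ i0 ∧ x0 ∈ ℓ j0 := by have := J.min'_mem hJne; simpa [hJ] using this
  have hjmin : ∀ k, k ≠ i0 → x0 ∈ ℓ k → j0 ≤ k := fun k h1 h2 =>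
    J.min'_le k (by simp [hJ, h1, h2])
  set p2 : V → Bool := fun u => !decide (u = x0) with hp2
  have hdw2 : (ℓ j0).dropWhile p2 ≠ [] := by
    rw [Ne, List.dropWhile_eq_nil_iff]
    push_neg
    exact ⟨x0, hj0.2, by simp [hp2]⟩
  obtain ⟨y, sufj, hrest2⟩ : ∃ y s, (ℓ j0).dropWhile p2 = y :: s := by
    cases h' : (ℓ j0).dropWhile p2 with
    | nil => exact absurd h' hdw2
    | cons y t => exact ⟨y, t, rfl⟩
  have hy : y = x0 := by
    have := dropWhile_cons_prop hrest2
    simpa [hp2] using this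
  subst hy
  have heqj : ℓ j0 = (ℓ j0).takeWhile p2 ++ y :: sufj := by
    rw [← hrest2, List.takeWhile_append_dropWhile]
  have hxpre2 : y ∉ (ℓ j0).takeWhile p2 := fun hx => by
    have := List.mem_takeWhile_imp hx
    simp [hp2] at this
  exact ⟨⟨i0, j0, y, (ℓ i0).takeWhile p, sufi, (ℓ j0).takeWhile p2, sufj⟩,
    hi0, himin, heqi, hpre, hQx0, hj0.1, hj0.2, hjmin, heqj, hxpre2⟩

lemma swapData_unique {ℓ : Fin n → List V} {d d' : GVData n V}
    (hd : IsSwapData ℓ d) (hd' : IsSwapData ℓ d') : d = d' := by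
  obtain ⟨i0, j0, x0, pre, sufi, prej, sufj⟩ := d
  obtain ⟨i0', j0', x0', pre', sufi', prej', sufj'⟩ := d'
  have e1 : i0 = i0' := le_antisymm (hd.imin _ hd'.meets) (hd'.imin _ hd.meets)
  subst e1
  obtain ⟨rfl, rfl, rfl⟩ :=
    first_split_unique (Q := fun v => ∃ j, j ≠ i0 ∧ v ∈ ℓ j)
      (hd.eqi.symm.trans hd'.eqi) hd.preQ hd.Qx hd'.preQ hd'.Qx
  have e3 : j0 = j0' := le_antisymm (hd.jmin _ hd'.jne hd'.xj) (hd'.jmin _ hd.jne hd.xj)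
  subst e3
  obtain ⟨rfl, -, rfl⟩ :=
    first_split_unique (Q := fun v => v = x0)
      (hd.eqj.symm.trans hd'.eqj) (fun v hv e => hd.xprej (e ▸ hv)) rfl
      (fun v hv e => hd'.xprej (e ▸ hv)) rfl
  rfl

end Swap

section Swap2

variable {n : ℕ}

/-- The mirrored crossing data (with the two tails exchanged). -/
def GVData.mirror (d : GVData n V) : GVData n V :=
  ⟨d.i0, d.j0, d.x0, d.pre, d.sufj, d.prej, d.sufi⟩

/-- Exchange the tails of the two crossing paths. -/
def lSwap (ℓ : Fin n → List V) (d : GVData n V) : Fin n → List V :=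
  Function.update (Function.update ℓ d.i0 (d.pre ++ d.x0 :: d.sufj)) d.j0
    (d.prej ++ d.x0 :: d.sufi)

lemma lSwap_i0 {ℓ : Fin n → List V} {d : GVData n V} (h : d.j0 ≠ d.i0) :
    lSwap ℓ d d.i0 = d.pre ++ d.x0 :: d.sufj := by
  rw [lSwap, Function.update_of_ne (Ne.symm h), Function.update_self]

lemma lSwap_j0 {ℓ : Fin n → List V} {d : GVData n V} :
    lSwap ℓ d d.j0 = d.prej ++ d.x0 :: d.sufi := by
  rw [lSwap, Function.update_self]

lemma lSwap_other {ℓ : Fin n → List V} {d : GVData n V} {k : Fin n}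
    (h1 : k ≠ d.i0) (h2 : k ≠ d.j0) : lSwap ℓ d k = ℓ k := by
  rw [lSwap, Function.update_of_ne h2, Function.update_of_ne h1]

lemma isSwapData_lSwap {ℓ : Fin n → List V} {d : GVData n V} (hd : IsSwapData ℓ d)
    (hnod : (ℓ d.i0).Nodup) : IsSwapData (lSwap ℓ d) d.mirror := by
  have hji : d.j0 ≠ d.i0 := hd.jne
  have hij : d.i0 ≠ d.j0 := Ne.symm hji
  have hLi : lSwap ℓ d d.i0 = d.pre ++ d.x0 :: d.sufj := lSwap_i0 hji
  have hLj : lSwap ℓ d d.j0 = d.prej ++ d.x0 :: d.sufi := lSwap_j0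
  have hxi : d.x0 ∈ ℓ d.i0 := by rw [hd.eqi]; exact List.mem_append_right _ (by simp)
  have hxLi : d.x0 ∈ lSwap ℓ d d.i0 := by rw [hLi]; exact List.mem_append_right _ (by simp)
  have hxLj : d.x0 ∈ lSwap ℓ d d.j0 := by rw [hLj]; exact List.mem_append_right _ (by simp)
  have memLi : ∀ v ∈ lSwap ℓ d d.i0, v ∈ ℓ d.i0 ∨ v ∈ ℓ d.j0 := by
    intro v hv
    rw [hLi] at hv
    rcases List.mem_append.mp hv with h | h
    · exact Or.inl (by rw [hd.eqi]; exact List.mem_append_left _ h)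
    · rcases List.mem_cons.mp h with rfl | h
      · exact Or.inl hxi
      · exact Or.inr (by rw [hd.eqj]; exact List.mem_append_right _ (List.mem_cons_of_mem _ h))
  have memLj : ∀ v ∈ lSwap ℓ d d.j0, v ∈ ℓ d.i0 ∨ v ∈ ℓ d.j0 := by
    intro v hv
    rw [hLj] at hv
    rcases List.mem_append.mp hv with h | h
    · exact Or.inr (by rw [hd.eqj]; exact List.mem_append_left _ h)
    · rcases List.mem_cons.mp h with rfl | h
      · exact Or.inl hxi
      · exact Or.inl (by rw [hd.eqi]; exact List.mem_append_right _ (List.mem_cons_of_mem _ h))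
  have hnodsplit : (d.pre ++ d.x0 :: d.sufi).Nodup := by rw [← hd.eqi]; exact hnod
  refine ⟨⟨d.j0, hji, d.x0, hxLi, hxLj⟩, ?_, hLi, ?_, ⟨d.j0, hji, hxLj⟩, hji, hxLj, ?_, hLj,
    hd.xprej⟩
  · -- minimality of i0
    rintro k ⟨m, hmk, v, hvk, hvm⟩
    rcases eq_or_ne k d.i0 with rfl | hki
    · exact le_refl _
    rcases eq_or_ne k d.j0 with rfl | hkj
    · exact hd.imin d.j0 ⟨d.i0, hij, d.x0, hd.xj, hxi⟩
    have hvk' : v ∈ ℓ k := by rwa [lSwap_other hki hkj] at hvk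
    have hex : ∃ t, t ≠ k ∧ v ∈ ℓ t := by
      rcases eq_or_ne m d.i0 with rfl | hmi
      · rcases memLi v hvm with h | h
        · exact ⟨d.i0, Ne.symm hki, h⟩
        · exact ⟨d.j0, Ne.symm hkj, h⟩
      rcases eq_or_ne m d.j0 with rfl | hmj
      · rcases memLj v hvm with h | h
        · exact ⟨d.i0, Ne.symm hki, h⟩
        · exact ⟨d.j0, Ne.symm hkj, h⟩
      · exact ⟨m, hmk, by rwa [lSwap_other hmi hmj] at hvm⟩
    obtain ⟨t, htk, hvt⟩ := hex
    exact hd.imin k ⟨t, htk, v, hvk', hvt⟩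
  · -- preQ
    rintro v hv ⟨j, hjne, hvj⟩
    replace hjne : j ≠ d.i0 := hjne
    replace hv : v ∈ d.pre := hv
    have hQv := hd.preQ v hv
    have hvx : v ≠ d.x0 := fun e => hQv (e ▸ hd.Qx)
    rcases eq_or_ne j d.j0 with rfl | hjj
    · rw [hLj] at hvj
      rcases List.mem_append.mp hvj with h | h
      · exact hQv ⟨d.j0, hji, by rw [hd.eqj]; exact List.mem_append_left _ h⟩
      · rcases List.mem_cons.mp h with e | h
        · exact hvx e
        · exact (List.nodup_append'.mp hnodsplit).2.2 hv (List.mem_cons_of_mem _ h)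
    · rw [lSwap_other hjne hjj] at hvj
      exact hQv ⟨j, hjne, hvj⟩
  · -- jmin
    intro k hki hk
    replace hki : k ≠ d.i0 := hki
    replace hk : d.x0 ∈ lSwap ℓ d k := hk
    show d.j0 ≤ k
    rcases eq_or_ne k d.j0 with rfl | hkj
    · exact le_refl _
    · rw [lSwap_other hki hkj] at hk
      exact hd.jmin k hki hk

lemma lSwap_lSwap {ℓ : Fin n → List V} {d : GVData n V} (hd : IsSwapData ℓ d) :
    lSwap (lSwap ℓ d) d.mirror = ℓ := by
  have hji : d.j0 ≠ d.i0 := hd.jne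
  funext k
  rcases eq_or_ne k d.i0 with rfl | hki
  · have h1 : lSwap (lSwap ℓ d) d.mirror d.mirror.i0
        = d.mirror.pre ++ d.mirror.x0 :: d.mirror.sufj := lSwap_i0 (d := d.mirror) hji
    have h2 : lSwap (lSwap ℓ d) d.mirror d.i0 = d.pre ++ d.x0 :: d.sufi := h1
    rw [h2, ← hd.eqi]
  rcases eq_or_ne k d.j0 with rfl | hkj
  · have h1 : lSwap (lSwap ℓ d) d.mirror d.mirror.j0
        = d.mirror.prej ++ d.mirror.x0 :: d.mirror.sufi := lSwap_j0 (d := d.mirror)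
    have h2 : lSwap (lSwap ℓ d) d.mirror d.j0 = d.prej ++ d.x0 :: d.sufj := h1
    rw [h2, ← hd.eqj]
  · rw [lSwap_other (d := d.mirror) hki hkj, lSwap_other hki hkj]

lemma isGVPath_lSwap {w : V → V → R} {ℓ : Fin n → List V} {d : GVData n V}
    (hd : IsSwapData ℓ d) {a bb : Fin n → V} {σ : Equiv.Perm (Fin n)}
    (hp : ∀ i, IsGVPath w (a i) (bb (σ i)) (ℓ i)) (i : Fin n) :
    IsGVPath w (a i) (bb ((σ * Equiv.swap d.i0 d.j0) i)) (lSwap ℓ d i) := by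
  have hji : d.j0 ≠ d.i0 := hd.jne
  obtain ⟨hhi, hli, hci⟩ := hp d.i0
  obtain ⟨hhj, hlj, hcj⟩ := hp d.j0
  rw [hd.eqi] at hhi hli hci
  rw [hd.eqj] at hhj hlj hcj
  unfold List.Chain' at hci hcj
  rw [List.isChain_append] at hci hcj
  rcases eq_or_ne i d.i0 with rfl | hi
  · rw [lSwap_i0 hji]
    have hperm : (σ * Equiv.swap d.i0 d.j0) d.i0 = σ d.j0 := by
      simp [Equiv.Perm.mul_apply]
    rw [hperm]
    refine ⟨?_, ?_, ?_⟩
    · rw [head?_append_cons] at hhi ⊢; exact hhi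
    · rw [getLast?_append_cons]
      rw [getLast?_append_cons] at hlj
      exact hlj
    · refine List.isChain_append.mpr ⟨hci.1, hcj.2.1, fun y hy z hz => ?_⟩
      simp only [List.head?_cons, Option.mem_def, Option.some.injEq] at hz
      exact hci.2.2 y hy z (by simp [hz])
  rcases eq_or_ne i d.j0 with rfl | hj
  · rw [lSwap_j0]
    have hperm : (σ * Equiv.swap d.i0 d.j0) d.j0 = σ d.i0 := by
      simp [Equiv.Perm.mul_apply]
    rw [hperm]
    refine ⟨?_, ?_, ?_⟩
    · rw [head?_append_cons] at hhj ⊢; exact hhj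
    · rw [getLast?_append_cons]
      rw [getLast?_append_cons] at hli
      exact hli
    · refine List.isChain_append.mpr ⟨hcj.1, hci.2.1, fun y hy z hz => ?_⟩
      simp only [List.head?_cons, Option.mem_def, Option.some.injEq] at hz
      exact hcj.2.2 y hy z (by simp [hz])
  · rw [lSwap_other hi hj]
    have hperm : (σ * Equiv.swap d.i0 d.j0) i = σ i := by
      simp [Equiv.Perm.mul_apply, Equiv.swap_apply_of_ne_of_ne hi hj]
    rw [hperm]
    exact hp i

lemma prod_gvWeight_lSwap (w : V → V → R) {ℓ : Fin n → List V} {d : GVData n V}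
    (hd : IsSwapData ℓ d) :
    ∏ i, gvWeight w (lSwap ℓ d i) = ∏ i, gvWeight w (ℓ i) := by
  classical
  have hji : d.j0 ≠ d.i0 := hd.jne
  have key : gvWeight w (lSwap ℓ d d.j0) * gvWeight w (lSwap ℓ d d.i0)
      = gvWeight w (ℓ d.j0) * gvWeight w (ℓ d.i0) := by
    have e1 := gvWeight_append w d.pre d.x0 d.sufj
    have e2 := gvWeight_append w d.prej d.x0 d.sufi
    have e3 := gvWeight_append w d.pre d.x0 d.sufi
    have e4 := gvWeight_append w d.prej d.x0 d.sufj
    rw [lSwap_i0 hji, lSwap_j0, hd.eqi, hd.eqj, e1, e2, e3, e4]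
    ring
  have hmem : d.i0 ∈ (Finset.univ : Finset (Fin n)) \ {d.j0} := by
    simp [Finset.mem_sdiff, Ne.symm hji]
  rw [Finset.prod_eq_mul_prod_sdiff_singleton_of_mem (Finset.mem_univ d.j0)
      (fun i => gvWeight w (lSwap ℓ d i)),
    Finset.prod_eq_mul_prod_sdiff_singleton_of_mem hmem (fun i => gvWeight w (lSwap ℓ d i)),
    Finset.prod_eq_mul_prod_sdiff_singleton_of_mem (Finset.mem_univ d.j0) (fun i => gvWeight w (ℓ i)),
    Finset.prod_eq_mul_prod_sdiff_singleton_of_mem hmem (fun i => gvWeight w (ℓ i))]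
  rw [← mul_assoc, ← mul_assoc, key]
  congr 1
  refine Finset.prod_congr rfl fun k hk => ?_
  simp only [Finset.mem_sdiff, Finset.mem_singleton, Finset.mem_univ, true_and] at hk
  rw [lSwap_other hk.2 hk.1]

end Swap2


end LGV

/-- **Lindström–Gessel–Viennot lemma.** Let `w : V × V → R` be an edge-weight function
on a finite vertex set `V` whose associated relation `w u v ≠ 0` is acyclic, let
`a 0, …, a (n-1)` be distinct left endpoints and `b 0, …, b (n-1)` distinct right
endpoints, and let `Vmat i j` be the total weight of all paths from `a i` to `b j`.
Then `det Vmat` is the sum, over all pairs of a permutation `σ` and an `n`-tuple `ℓ` of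
pairwise vertex-disjoint paths with `ℓ i` a path from `a i` to `b (σ i)`, of
`sign σ` times the product of the weights of the paths `ℓ i`. -/
theorem lindstrom_gessel_viennot {V : Type*} [Fintype V] [DecidableEq V]
    {R : Type*} [CommRing R] (w : V → V → R)
    (hacyc : Irreflexive (Relation.TransGen fun u v => w u v ≠ 0))
    (n : ℕ) (a b : Fin n → V) (ha : Function.Injective a) (hb : Function.Injective b)
    (Vmat : Matrix (Fin n) (Fin n) R)
    (hV : ∀ i j, Vmat i j = ∑ᶠ p ∈ {p : List V | IsGVPath w (a i) (b j) p}, gvWeight w p) :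
    Vmat.det =
      ∑ᶠ x ∈ {x : Equiv.Perm (Fin n) × (Fin n → List V) |
          (∀ i, IsGVPath w (a i) (b (x.1 i)) (x.2 i)) ∧
          (∀ i, (x.2 i).Nodup) ∧
          (∀ i j, i ≠ j → (x.2 i).Disjoint (x.2 j))},
        (Equiv.Perm.sign x.1 : ℤ) • ∏ i, gvWeight w (x.2 i) := by
  classical
  have hnodup : ∀ {u v : V} {p : List V}, IsGVPath w u v p → p.Nodup :=
    fun h => LGV.chain'_nodup hacyc h.2.2
  have hfinL : {p : List V | p.Nodup}.Finite :=
    (List.finite_length_le V (Fintype.card V)).subset fun p hp => hp.length_le_card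
  have hfinP : ∀ u v : V, {p : List V | IsGVPath w u v p}.Finite := fun u v =>
    hfinL.subset fun p hp => hnodup hp
  set T : Set (Equiv.Perm (Fin n) × (Fin n → List V)) :=
    {x : Equiv.Perm (Fin n) × (Fin n → List V) |
          (∀ i, IsGVPath w (a i) (b (x.1 i)) (x.2 i)) ∧
          (∀ i, (x.2 i).Nodup) ∧
          (∀ i j, i ≠ j → (x.2 i).Disjoint (x.2 j))} with hTdef
  set A : Set (Equiv.Perm (Fin n) × (Fin n → List V)) :=
    {x | ∀ i, IsGVPath w (a i) (b (x.1 i)) (x.2 i)} with hAdef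
  have hAfin : A.Finite := by
    have h1 : {ℓ : Fin n → List V | ∀ i, (ℓ i).Nodup}.Finite := by
      refine (Set.Finite.pi (fun _ : Fin n => hfinL)).subset ?_
      intro ℓ hℓ i _
      exact hℓ i
    refine (Set.finite_univ.prod h1).subset ?_
    intro x hx
    exact ⟨trivial, fun i => hnodup (hx i)⟩
  have hTsub : T ⊆ A := fun x hx => hx.1
  have hTfin : T.Finite := hAfin.subset hTsub
  rw [finsum_mem_eq_finite_toFinset_sum _ hTfin]
  have hVmat : ∀ i j, Vmat i j = ∑ p ∈ (hfinP (a i) (b j)).toFinset, gvWeight w p := by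
    intro i j
    rw [hV i j, finsum_mem_eq_finite_toFinset_sum _ (hfinP (a i) (b j))]
  show Vmat.det = ∑ x ∈ hTfin.toFinset,
    (Equiv.Perm.sign x.1 : ℤ) • ∏ i, gvWeight w (x.2 i)
  have hdet : Vmat.det = ∑ x ∈ hAfin.toFinset,
      (Equiv.Perm.sign x.1 : ℤ) • ∏ i, gvWeight w (x.2 i) := by
    rw [← Matrix.det_transpose Vmat, Matrix.det_apply]
    have step1 : ∀ σ : Equiv.Perm (Fin n),
        Equiv.Perm.sign σ • ∏ i, Vmat.transpose (σ i) i
          = ∑ ℓ ∈ Fintype.piFinset (fun i => (hfinP (a i) (b (σ i))).toFinset),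
              (Equiv.Perm.sign σ : ℤ) • ∏ i, gvWeight w (ℓ i) := by
      intro σ
      have e1 : ∏ i, Vmat.transpose (σ i) i = ∏ i, Vmat i (σ i) :=
        Finset.prod_congr rfl fun i _ => Matrix.transpose_apply Vmat (σ i) i
      have e2 : ∏ i, Vmat i (σ i)
          = ∑ ℓ ∈ Fintype.piFinset (fun i => (hfinP (a i) (b (σ i))).toFinset),
              ∏ i, gvWeight w (ℓ i) := by
        rw [← Finset.prod_univ_sum]
        exact Finset.prod_congr rfl fun i _ => hVmat i (σ i)
      rw [e1, e2, Units.smul_def, Finset.smul_sum]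
    rw [Finset.sum_congr rfl (fun σ _ => step1 σ), Finset.sum_sigma']
    refine Finset.sum_nbij' (fun x => (x.1, x.2)) (fun x => ⟨x.1, x.2⟩) ?_ ?_ ?_ ?_ ?_
    · intro x hx
      rw [Finset.mem_sigma] at hx
      rw [Set.Finite.mem_toFinset]
      intro i
      have := (Fintype.mem_piFinset.mp hx.2) i
      rw [Set.Finite.mem_toFinset] at this
      exact this
    · intro x hx
      rw [Set.Finite.mem_toFinset] at hx
      rw [Finset.mem_sigma]
      refine ⟨Finset.mem_univ _, Fintype.mem_piFinset.mpr fun i => ?_⟩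
      rw [Set.Finite.mem_toFinset]
      exact hx i
    · intro x _; rfl
    · intro x _; rfl
    · intro x _; rfl
  have hsub2 : hTfin.toFinset ⊆ hAfin.toFinset := fun x hx =>
    (Set.Finite.mem_toFinset hAfin).mpr (hTsub ((Set.Finite.mem_toFinset hTfin).mp hx))
  suffices h0 : ∑ x ∈ hAfin.toFinset \ hTfin.toFinset,
      (Equiv.Perm.sign x.1 : ℤ) • ∏ i, gvWeight w (x.2 i) = 0 by
    rw [hdet, ← Finset.sum_sdiff hsub2, h0, zero_add]
  have hmeet : ∀ x ∈ hAfin.toFinset \ hTfin.toFinset, ∃ i, LGV.Meets x.2 i := by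
    intro x hx
    rw [Finset.mem_sdiff, Set.Finite.mem_toFinset, Set.Finite.mem_toFinset] at hx
    obtain ⟨hxA, hxT⟩ := hx
    have hnd : ¬ (∀ i j, i ≠ j → (x.2 i).Disjoint (x.2 j)) := by
      intro hdisj
      exact hxT ⟨hxA, fun i => hnodup (hxA i), hdisj⟩
    push_neg at hnd
    obtain ⟨i, j, hij, hnd⟩ := hnd
    have hex : ∃ v, v ∈ x.2 i ∧ v ∈ x.2 j := by
      by_contra hc
      push_neg at hc
      exact hnd fun {v} hv => hc v hv
    obtain ⟨v, hv1, hv2⟩ := hex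
    exact ⟨i, j, Ne.symm hij, v, hv1, hv2⟩
  have hsd : ∀ x (hx : x ∈ hAfin.toFinset \ hTfin.toFinset),
      ∃ dd : LGV.GVData n V, LGV.IsSwapData x.2 dd :=
    fun x hx => LGV.exists_swapData (hmeet x hx)
  have hxA : ∀ x (hx : x ∈ hAfin.toFinset \ hTfin.toFinset),
      ∀ i, IsGVPath w (a i) (b (x.1 i)) (x.2 i) := by
    intro x hx
    rw [Finset.mem_sdiff, Set.Finite.mem_toFinset] at hx
    exact hx.1
  have gmem : ∀ x (hx : x ∈ hAfin.toFinset \ hTfin.toFinset),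
      ((x.1 * Equiv.swap ((hsd x hx).choose.i0) ((hsd x hx).choose.j0),
        LGV.lSwap x.2 (hsd x hx).choose) : Equiv.Perm (Fin n) × (Fin n → List V))
        ∈ hAfin.toFinset \ hTfin.toFinset := by
    intro x hx
    have hd := (hsd x hx).choose_spec
    have hnodi : (x.2 (hsd x hx).choose.i0).Nodup := hnodup (hxA x hx (hsd x hx).choose.i0)
    have hd' := LGV.isSwapData_lSwap hd hnodi
    rw [Finset.mem_sdiff, Set.Finite.mem_toFinset, Set.Finite.mem_toFinset]
    constructor
    · exact fun i => LGV.isGVPath_lSwap hd (hxA x hx) i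
    · intro hT
      obtain ⟨j, hjne, v, hv1, hv2⟩ := hd'.meets
      exact hT.2.2 _ _ (Ne.symm hjne) hv1 hv2
  refine Finset.sum_involution
    (fun x hx => (x.1 * Equiv.swap ((hsd x hx).choose.i0) ((hsd x hx).choose.j0),
      LGV.lSwap x.2 (hsd x hx).choose)) ?_ ?_ ?_ ?_
  · -- cancellation
    intro x hx
    have hd := (hsd x hx).choose_spec
    have hprod := LGV.prod_gvWeight_lSwap w hd
    have hsign : (Equiv.Perm.sign (x.1 * Equiv.swap ((hsd x hx).choose.i0)
        ((hsd x hx).choose.j0)) : ℤ) = -(Equiv.Perm.sign x.1 : ℤ) := by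
      rw [Equiv.Perm.sign_mul, Equiv.Perm.sign_swap (Ne.symm hd.jne)]
      simp
    show (Equiv.Perm.sign x.1 : ℤ) • ∏ i, gvWeight w (x.2 i)
        + (Equiv.Perm.sign (x.1 * Equiv.swap ((hsd x hx).choose.i0)
            ((hsd x hx).choose.j0)) : ℤ)
          • ∏ i, gvWeight w (LGV.lSwap x.2 (hsd x hx).choose i) = 0
    rw [hprod, hsign, neg_smul]
    exact add_neg_cancel _
  · -- g ≠ id
    intro x hx _
    have hd := (hsd x hx).choose_spec
    intro heq
    have h1 := congrArg Prod.fst heq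
    simp only at h1
    rw [mul_eq_left] at h1
    have h2 : Equiv.swap ((hsd x hx).choose.i0) ((hsd x hx).choose.j0)
        ((hsd x hx).choose.i0) = (1 : Equiv.Perm (Fin n)) ((hsd x hx).choose.i0) := by
      rw [h1]
    simp only [Equiv.swap_apply_left, Equiv.Perm.coe_one, id_eq] at h2
    exact hd.jne h2
  · -- membership
    exact gmem
  · -- involution
    intro x hx
    have hd := (hsd x hx).choose_spec
    have hnodi : (x.2 (hsd x hx).choose.i0).Nodup := hnodup (hxA x hx (hsd x hx).choose.i0)
    have hd' := LGV.isSwapData_lSwap hd hnodi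
    have hy_mem := gmem x hx
    show (((x.1 * Equiv.swap ((hsd x hx).choose.i0) ((hsd x hx).choose.j0),
            LGV.lSwap x.2 (hsd x hx).choose) :
          Equiv.Perm (Fin n) × (Fin n → List V)).1
        * Equiv.swap ((hsd _ hy_mem).choose.i0) ((hsd _ hy_mem).choose.j0),
      LGV.lSwap ((x.1 * Equiv.swap ((hsd x hx).choose.i0) ((hsd x hx).choose.j0),
            LGV.lSwap x.2 (hsd x hx).choose) :
          Equiv.Perm (Fin n) × (Fin n → List V)).2 (hsd _ hy_mem).choose) = x
    have hduniq : (hsd _ hy_mem).choose = (hsd x hx).choose.mirror :=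
      LGV.swapData_unique (hsd _ hy_mem).choose_spec hd'
    rw [hduniq]
    have e2 : LGV.lSwap (LGV.lSwap x.2 (hsd x hx).choose) (hsd x hx).choose.mirror = x.2 :=
      LGV.lSwap_lSwap hd
    have e1 : x.1 * Equiv.swap ((hsd x hx).choose.i0) ((hsd x hx).choose.j0)
        * Equiv.swap ((hsd x hx).choose.mirror.i0) ((hsd x hx).choose.mirror.j0)
        = x.1 := by
      show x.1 * Equiv.swap ((hsd x hx).choose.i0) ((hsd x hx).choose.j0)
          * Equiv.swap ((hsd x hx).choose.i0) ((hsd x hx).choose.j0) = x.1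
      rw [mul_assoc, Equiv.swap_mul_self, mul_one]
    exact Prod.ext e1 e2
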